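/- Every 4-dimensional Lie algebra over an algebraically closed field has a Lie subalgebra of codimension 1, i.e. a Lie subalgebra whose underlying vector space has dimension 3. (This is the case n = 2 of the paper's main theorem that an (n+2)-dimensional n-Lie algebra over an algebraically closed field has a subalgebra of codimension 1.) -/

import Mathlib

open Module Submodule LieModule Module.End

section Helpers

variable {F : Type*} [Field F] {A : Type*} [LieRing A] [LieAlgebra F A]

/-- Build a Lie subalgebra from a bracket-closed submodule. -/
def LieSubalgebra.ofSubmodule' (S : Submodule F A)
    (h : ∀ u ∈ S, ∀ v ∈ S, ⁅u, v⁆ ∈ S) : LieSubalgebra F A :=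
  { S with lie_mem' := fun {u v} hu hv => h u hu v hv }

lemma LieSubalgebra.finrank_ofSubmodule' (S : Submodule F A)
    (h : ∀ u ∈ S, ∀ v ∈ S, ⁅u, v⁆ ∈ S) :
    Module.finrank F (LieSubalgebra.ofSubmodule' S h) = Module.finrank F S := rfl

/-- brackets from a sup on the left. -/
lemma lie_mem_target_of_sup_left {P Q R S : Submodule F A}
    (hP : ∀ u ∈ P, ∀ v ∈ R, ⁅u, v⁆ ∈ S)
    (hQ : ∀ u ∈ Q, ∀ v ∈ R, ⁅u, v⁆ ∈ S) :
    ∀ u ∈ P ⊔ Q, ∀ v ∈ R, ⁅u, v⁆ ∈ S := by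
  intro u hu v hv
  obtain ⟨p, hp, q, hq, rfl⟩ := Submodule.mem_sup.mp hu
  rw [add_lie]
  exact add_mem (hP p hp v hv) (hQ q hq v hv)

lemma lie_mem_target_of_sup {P Q S : Submodule F A}
    (hPP : ∀ u ∈ P, ∀ v ∈ P, ⁅u, v⁆ ∈ S)
    (hQQ : ∀ u ∈ Q, ∀ v ∈ Q, ⁅u, v⁆ ∈ S)
    (hPQ : ∀ u ∈ P, ∀ v ∈ Q, ⁅u, v⁆ ∈ S) :
    ∀ u ∈ P ⊔ Q, ∀ v ∈ P ⊔ Q, ⁅u, v⁆ ∈ S := by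
  have hQP : ∀ u ∈ Q, ∀ v ∈ P, ⁅u, v⁆ ∈ S := by
    intro u hu v hv
    rw [← lie_skew]
    exact neg_mem (hPQ v hv u hu)
  intro u hu v hv
  obtain ⟨p, hp, q, hq, rfl⟩ := Submodule.mem_sup.mp hv
  rw [lie_add]
  exact add_mem (lie_mem_target_of_sup_left hPP hQP u hu p hp)
    (lie_mem_target_of_sup_left hPQ hQQ u hu q hq)

lemma lie_mem_target_of_sup3 {P Q R S : Submodule F A}
    (hPP : ∀ u ∈ P, ∀ v ∈ P, ⁅u, v⁆ ∈ S)
    (hQQ : ∀ u ∈ Q, ∀ v ∈ Q, ⁅u, v⁆ ∈ S)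
    (hRR : ∀ u ∈ R, ∀ v ∈ R, ⁅u, v⁆ ∈ S)
    (hPQ : ∀ u ∈ P, ∀ v ∈ Q, ⁅u, v⁆ ∈ S)
    (hPR : ∀ u ∈ P, ∀ v ∈ R, ⁅u, v⁆ ∈ S)
    (hQR : ∀ u ∈ Q, ∀ v ∈ R, ⁅u, v⁆ ∈ S) :
    ∀ u ∈ P ⊔ Q ⊔ R, ∀ v ∈ P ⊔ Q ⊔ R, ⁅u, v⁆ ∈ S := by
  have hQP : ∀ u ∈ Q, ∀ v ∈ P, ⁅u, v⁆ ∈ S := fun u hu v hv => by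
    rw [← lie_skew]; exact neg_mem (hPQ v hv u hu)
  have hRP : ∀ u ∈ R, ∀ v ∈ P, ⁅u, v⁆ ∈ S := fun u hu v hv => by
    rw [← lie_skew]; exact neg_mem (hPR v hv u hu)
  have hRQ : ∀ u ∈ R, ∀ v ∈ Q, ⁅u, v⁆ ∈ S := fun u hu v hv => by
    rw [← lie_skew]; exact neg_mem (hQR v hv u hu)
  apply lie_mem_target_of_sup
  · exact lie_mem_target_of_sup hPP hQQ hPQ
  · exact hRR
  · exact lie_mem_target_of_sup_left hPR hQR

/-- In a 1-dimensional submodule all brackets vanish. -/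
lemma lie_eq_zero_of_finrank_one {S : Submodule F A} (h : Module.finrank F S = 1) :
    ∀ u ∈ S, ∀ v ∈ S, ⁅u, v⁆ = (0 : A) := by
  obtain ⟨g, hg0, hall⟩ := finrank_eq_one_iff'.mp h
  intro u hu v hv
  obtain ⟨a, ha⟩ := hall ⟨u, hu⟩
  obtain ⟨b, hb⟩ := hall ⟨v, hv⟩
  have hu' : u = a • (g : A) := by
    have := congrArg (Subtype.val) ha; simpa using this.symm
  have hv' : v = b • (g : A) := by
    have := congrArg (Subtype.val) hb; simpa using this.symm
  rw [hu', hv', smul_lie, lie_smul, lie_self, smul_zero, smul_zero]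

end Helpers
section Extension

variable {F : Type*} [Field F] {V : Type*} [AddCommGroup V] [Module F V] [Module.Finite F V]

lemma exists_superspace_finrank_add (k : ℕ) :
    ∀ D : Submodule F V, Module.finrank F D + k ≤ Module.finrank F V →
      ∃ W : Submodule F V, D ≤ W ∧ Module.finrank F W = Module.finrank F D + k := by
  induction k with
  | zero => exact fun D _ => ⟨D, le_rfl, rfl⟩
  | succ k ih =>
    intro D h
    have hlt : Module.finrank F D < Module.finrank F V := by omega
    obtain ⟨m, hm⟩ := D.exists_of_finrank_lt hlt
    have hm0 : m ∉ D := by simpa using hm 1 one_ne_zero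
    have hmne : m ≠ 0 := by rintro rfl; exact hm0 D.zero_mem
    have hdis : Disjoint D (span F {m}) := by
      rw [Submodule.disjoint_span_singleton]
      exact fun hmem => absurd hmem hm0
    have hfr : Module.finrank F ↥(D ⊔ span F {m}) = Module.finrank F D + 1 := by
      have h1 := Submodule.finrank_sup_add_finrank_inf_eq D (span F {m})
      rw [hdis.eq_bot] at h1
      rw [finrank_span_singleton hmne] at h1
      simpa using h1
    obtain ⟨W, hW1, hW2⟩ := ih (D ⊔ span F {m}) (by omega)
    exact ⟨W, le_trans le_sup_left hW1, by omega⟩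

lemma exists_superspace_finrank (D : Submodule F V) (n : ℕ)
    (h1 : Module.finrank F D ≤ n) (h2 : n ≤ Module.finrank F V) :
    ∃ W : Submodule F V, D ≤ W ∧ Module.finrank F W = n := by
  obtain ⟨W, hW1, hW2⟩ := exists_superspace_finrank_add (n - Module.finrank F D) D (by omega)
  exact ⟨W, hW1, by omega⟩

end Extension
section Invariant

variable {F : Type*} [Field F] {V : Type*} [AddCommGroup V] [Module F V] [Module.Finite F V]

lemma exists_invariant_two_dim (f : Module.End F V) (μ : F)
    (h3 : Module.finrank F (f.maxGenEigenspace μ) = 3) :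
    ∃ W : Submodule F V, W ≤ f.maxGenEigenspace μ ∧ Module.finrank F W = 2 ∧
      ∀ w ∈ W, f w ∈ W := by
  set N : Module.End F V := f - μ • 1 with hN
  set K : ℕ → Submodule F V := fun k => LinearMap.ker (N ^ k) with hK
  have hKG : ∀ k : ℕ, f.genEigenspace μ (k : ℕ∞) = K k := fun k => genEigenspace_nat
  have hcommN : Commute f N := by
    apply Commute.sub_right (Commute.refl f)
    simpa [Algebra.algebraMap_eq_smul_one] using Algebra.commute_algebraMap_right μ f
  have hinv : ∀ (k : ℕ), ∀ w ∈ K k, f w ∈ K k := by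
    intro k w hw
    have hc : Commute (N ^ k) f := (hcommN.symm).pow_left k
    simp only [hK, LinearMap.mem_ker] at hw ⊢
    calc (N ^ k) (f w) = ((N ^ k) * f) w := rfl
      _ = (f * (N ^ k)) w := by rw [hc.eq]
      _ = f ((N ^ k) w) := rfl
      _ = 0 := by rw [hw, map_zero]
  have hKle : ∀ k : ℕ, K k ≤ f.maxGenEigenspace μ := by
    intro k
    rw [← hKG k]
    exact (f.genEigenspace μ).monotone le_top
  have hmono : ∀ k : ℕ, K k ≤ K (k + 1) := by
    intro k w hw
    simp only [hK, LinearMap.mem_ker] at hw ⊢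
    rw [pow_succ', Module.End.mul_apply, hw, map_zero]
  have hVK : f.maxGenEigenspace μ = K (Module.finrank F V) := by
    rw [maxGenEigenspace_eq_genEigenspace_finrank, hKG]
  -- the eigenspace is nonzero
  have hne : f.maxGenEigenspace μ ≠ ⊥ := by
    intro h
    rw [h, finrank_bot] at h3
    omega
  have hK1ne : K 1 ≠ ⊥ := by
    have h1 : f.HasEigenvalue μ := by
      apply hasEigenvalue_of_hasGenEigenvalue (k := Module.finrank F V)
      show f.genEigenspace μ _ ≠ ⊥
      rwa [hKG, ← hVK]
    rw [hasEigenvalue_iff] at h1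
    have e1 : f.eigenspace μ = K 1 := by rw [← hKG 1, Nat.cast_one]
    rwa [e1] at h1
  have hd1pos : 1 ≤ Module.finrank F (K 1) := by
    rcases Nat.eq_zero_or_pos (Module.finrank F (K 1)) with h | h
    · exact absurd (Submodule.finrank_eq_zero.mp h) hK1ne
    · omega
  have hd1le : Module.finrank F (K 1) ≤ 3 := by
    rw [← h3]
    exact Submodule.finrank_mono (hKle 1)
  -- case analysis on the dimension of the eigenspace
  rcases Nat.lt_or_ge (Module.finrank F (K 1)) 2 with hd1 | hd1
  · -- dim K 1 = 1 ; take W := K 2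
    have hd1' : Module.finrank F (K 1) = 1 := by omega
    refine ⟨K 2, hKle 2, ?_, hinv 2⟩
    have hle12 : K 1 ≤ K 2 := hmono 1
    -- upper bound : finrank K 2 ≤ 2
    have hmaps : ∀ w ∈ K 2, N w ∈ K 1 := by
      intro w hw
      simp only [hK, LinearMap.mem_ker] at hw ⊢
      rw [pow_one, ← Module.End.mul_apply, ← pow_two]
      exact hw
    set φ : ↥(K 2) →ₗ[F] ↥(K 1) := N.restrict hmaps with hφ
    have hub : Module.finrank F (K 2) ≤ 2 := by
      have hrank := LinearMap.finrank_range_add_finrank_ker φ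
      have h1 : Module.finrank F (LinearMap.range φ) ≤ Module.finrank F (K 1) :=
        Submodule.finrank_le _
      have h2 : Module.finrank F (LinearMap.ker φ) ≤ Module.finrank F (K 1) := by
        set ψ : ↥(LinearMap.ker φ) →ₗ[F] ↥(K 1) :=
          LinearMap.codRestrict (K 1) ((K 2).subtype.comp (LinearMap.ker φ).subtype)
            (by
              rintro ⟨⟨w, hw2⟩, hwk⟩
              have : φ ⟨w, hw2⟩ = 0 := hwk
              have : N w = 0 := by
                have := congrArg Subtype.val this
                simpa [hφ, LinearMap.restrict_apply] using this
              simp only [hK, LinearMap.mem_ker, Submodule.coe_subtype, LinearMap.comp_apply,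
                pow_one]
              exact this) with hψ
        have hinj : Function.Injective ψ := by
          rintro ⟨⟨w, hw⟩, hwk⟩ ⟨⟨w', hw'⟩, hwk'⟩ h
          have := congrArg Subtype.val h
          simp only [hψ, LinearMap.codRestrict_apply, LinearMap.comp_apply,
            Submodule.coe_subtype] at this
          exact Subtype.ext (Subtype.ext this)
        exact LinearMap.finrank_le_finrank_of_injective hinj
      omega
    -- lower bound : K 1 ≠ K 2
    have hlb : K 1 ≠ K 2 := by
      intro heq
      -- all kernels stabilize at K 1
      have hstab : ∀ k : ℕ, 1 ≤ k → K k = K 1 := by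
        intro k hk
        induction k with
        | zero => omega
        | succ k ih =>
          rcases Nat.eq_zero_or_pos k with h0 | h0
          · subst h0; rfl
          have hk1 := ih h0
          apply le_antisymm
          swap
          · rw [← hk1]; exact hmono k
          intro w hw
          have hNw : N w ∈ K k := by
            simp only [hK, LinearMap.mem_ker] at hw ⊢
            rw [← Module.End.mul_apply, ← pow_succ]
            exact hw
          rw [ih h0] at hNw
          have : w ∈ K 2 := by
            simp only [hK, LinearMap.mem_ker] at hNw ⊢
            rw [pow_two, Module.End.mul_apply]
            simpa [hK, pow_one] using hNw
          rwa [← heq] at this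
      have : f.maxGenEigenspace μ = K 1 := by
        rw [hVK]
        apply hstab
        have : 3 ≤ Module.finrank F V := by
          rw [← h3]
          exact Submodule.finrank_le _
        omega
      rw [this, hd1'] at h3
      omega
    have hlt : K 1 < K 2 := lt_of_le_of_ne hle12 hlb
    have := Submodule.finrank_lt_finrank_of_lt hlt
    omega
  · rcases Nat.lt_or_ge (Module.finrank F (K 1)) 3 with hd2 | hd2
    · -- dim K 1 = 2 : take W := K 1
      exact ⟨K 1, hKle 1, by omega, hinv 1⟩
    · -- K 1 is everything : f = μ • id there; take span of two basis vectors
      have heq : K 1 = f.maxGenEigenspace μ :=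
        Submodule.eq_of_le_of_finrank_le (hKle 1) (by omega)
      have hd1' : Module.finrank F (K 1) = 3 := by rw [heq]; exact h3
      let b : Basis (Fin 3) F ↥(K 1) :=
        (Module.finBasis F ↥(K 1)).reindex (finCongr hd1')
      set v : Fin 2 → V := fun i => (b (Fin.castSucc i) : V) with hv
      have hli : LinearIndependent F v := by
        have h1 : LinearIndependent F (fun i : Fin 2 => b (Fin.castSucc i)) :=
          b.linearIndependent.comp _ (Fin.castSucc_injective 2)
        exact h1.map' (K 1).subtype (Submodule.ker_subtype _)
      refine ⟨span F (Set.range v), ?_, ?_, ?_⟩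
      · rw [Submodule.span_le, ← heq]
        rintro - ⟨i, rfl⟩
        exact (b (Fin.castSucc i)).2
      · rw [finrank_span_eq_card hli]
        simp
      · intro w hw
        have hwK : w ∈ K 1 := by
          have hle : span F (Set.range v) ≤ K 1 := by
            rw [Submodule.span_le]
            rintro - ⟨i, rfl⟩
            exact (b (Fin.castSucc i)).2
          exact hle hw
        have : f w = μ • w := by
          simp only [hK, LinearMap.mem_ker, pow_one, hN] at hwK
          have := hwK
          rw [LinearMap.sub_apply, LinearMap.smul_apply, Module.End.one_apply, sub_eq_zero] at this
          exact this
        rw [this]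
        exact Submodule.smul_mem _ _ hw

end Invariant
section Spectral

variable (F : Type*) [Field F] [IsAlgClosed F] {A : Type*} [LieRing A] [LieAlgebra F A]
  [Module.Finite F A]

/-- The generalized eigenspace of `ad x` for eigenvalue `μ`. -/
def Egen (x : A) (μ : F) : Submodule F A :=
  (LieModule.toEnd F A A x).maxGenEigenspace μ

variable {F}

lemma Egen_def (x : A) (μ : F) :
    Egen F x μ = (LieModule.toEnd F A A x).maxGenEigenspace μ := rfl

lemma egen_lie {x : A} {μ ν : F} {u v : A} (hu : u ∈ Egen F x μ) (hv : v ∈ Egen F x ν) :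
    ⁅u, v⁆ ∈ Egen F x (μ + ν) :=
  LieModule.lie_mem_maxGenEigenspace_toEnd hu hv

lemma egen_lie_mem_of_le {x : A} {μ ν : F} {S : Submodule F A}
    (h : Egen F x (μ + ν) ≤ S) :
    ∀ u ∈ Egen F x μ, ∀ v ∈ Egen F x ν, ⁅u, v⁆ ∈ S :=
  fun _ hu _ hv => h (egen_lie hu hv)

lemma egen_self (x : A) : x ∈ Egen F x 0 := by
  rw [Egen_def, Module.End.mem_maxGenEigenspace]
  exact ⟨1, by simp [LieModule.toEnd_apply_apply]⟩

lemma egen_top (x : A) : ⨆ μ : F, Egen F x μ = ⊤ :=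
  Module.End.iSup_maxGenEigenspace_eq_top _

lemma egen_indep (x : A) : iSupIndep (Egen F x) :=
  Module.End.independent_maxGenEigenspace _

lemma egen_disjoint (x : A) {μ ν : F} (h : μ ≠ ν) :
    Disjoint (Egen F x μ) (Egen F x ν) :=
  Module.End.disjoint_genEigenspace _ h _ _

lemma egen_disjoint_sup (x : A) {s : Set F} {σ : F} (h : σ ∉ s) :
    Disjoint (Egen F x σ) (⨆ τ ∈ s, Egen F x τ) :=
  (egen_indep x).disjoint_biSup h

lemma egen_exists_new (x : A) (s : Set F) (h : (⨆ τ ∈ s, Egen F x τ) ≠ ⊤) :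
    ∃ σ ∉ s, Egen F x σ ≠ ⊥ := by
  by_contra hc
  push_neg at hc
  apply h
  rw [eq_top_iff, ← egen_top x]
  refine iSup_le fun μ => ?_
  by_cases hμ : μ ∈ s
  · exact le_biSup _ hμ
  · rw [hc μ hμ]; exact bot_le

lemma isNilpotent_of_egen_zero_top {x : A} (h : Egen F x 0 = ⊤) :
    IsNilpotent (LieModule.toEnd F A A x) := by
  refine ⟨Module.finrank F A, ?_⟩
  ext v
  have hv : v ∈ Egen F x 0 := by rw [h]; trivial
  rw [Egen_def, Module.End.maxGenEigenspace_eq_genEigenspace_finrank,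
    Module.End.mem_genEigenspace_nat, LinearMap.mem_ker] at hv
  simpa using hv

lemma egen_eigenvector {x : A} {μ : F} (h : Egen F x μ ≠ ⊥) :
    ∃ y : A, y ≠ 0 ∧ y ∈ Egen F x μ ∧ ⁅x, y⁆ = μ • y := by
  have h1 : (LieModule.toEnd F A A x).HasEigenvalue μ := by
    apply Module.End.hasEigenvalue_of_hasGenEigenvalue (k := Module.finrank F A)
    show (LieModule.toEnd F A A x).genEigenspace μ (Module.finrank F A : ℕ) ≠ ⊥
    rwa [Egen_def, Module.End.maxGenEigenspace_eq_genEigenspace_finrank] at h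
  obtain ⟨v, hv⟩ := h1.exists_hasEigenvector
  obtain ⟨hv1, hv2⟩ := Module.End.hasEigenvector_iff.mp hv
  refine ⟨v, hv2, ?_, ?_⟩
  · have hle : (LieModule.toEnd F A A x).eigenspace μ ≤ Egen F x μ := by
      rw [Egen_def]
      exact (Module.End.genEigenspace _ _).monotone le_top
    exact hle hv1
  · have := Module.End.mem_eigenspace_iff.mp hv1
    rwa [LieModule.toEnd_apply_apply] at this

lemma egen_ne_bot_of_finrank {x : A} {μ : F} {n : ℕ} (h : Module.finrank F (Egen F x μ) = n)
    (hn : 1 ≤ n) : Egen F x μ ≠ ⊥ := by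
  intro hb
  rw [hb, finrank_bot] at h
  omega

end Spectral
section Cases

variable {F : Type*} [Field F] [IsAlgClosed F] {A : Type*} [LieRing A] [LieAlgebra F A]
  [Module.Finite F A]

lemma finrank_sup_of_disjoint' {P Q : Submodule F A} (h : Disjoint P Q) :
    Module.finrank F ↥(P ⊔ Q) = Module.finrank F P + Module.finrank F Q := by
  have h1 := Submodule.finrank_sup_add_finrank_inf_eq P Q
  rw [h.eq_bot] at h1
  simpa using h1

lemma lie_mem_of_finrank_one {S T : Submodule F A} (h : Module.finrank F S = 1) :
    ∀ u ∈ S, ∀ v ∈ S, ⁅u, v⁆ ∈ T := fun u hu v hv => by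
  rw [lie_eq_zero_of_finrank_one h u hu v hv]
  exact T.zero_mem

/-- Case: `dim E₀ = 1`, `dim E_l = 2`, `dim E_m = 1`. -/
lemma spectral21 (x : A) (hdim : Module.finrank F A = 4) (l m : F)
    (hl0 : l ≠ 0) (hm0 : m ≠ 0) (hlm : l ≠ m)
    (hxne : x ≠ 0)
    (h0 : Module.finrank F (Egen F x 0) = 1)
    (hL : Module.finrank F (Egen F x l) = 2)
    (hM : Module.finrank F (Egen F x m) = 1) :
    ∃ S : LieSubalgebra F A, Module.finrank F S = 3 := by
  have hx0m : x ∈ Egen F x 0 := egen_self x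
  have hE0span : Egen F x 0 = span F {x} := by
    refine (Submodule.eq_of_le_of_finrank_le ((span_singleton_le_iff_mem x _).mpr hx0m) ?_).symm
    rw [finrank_span_singleton hxne, h0]
  have hd0l : Disjoint (Egen F x 0) (Egen F x l) := egen_disjoint x hl0.symm
  have hd0m : Disjoint (Egen F x 0) (Egen F x m) := egen_disjoint x hm0.symm
  have hdlm : Disjoint (Egen F x l) (Egen F x m) := egen_disjoint x hlm
  have hdm_sup : Disjoint (Egen F x m) (Egen F x 0 ⊔ Egen F x l) := by
    have := egen_disjoint_sup x (s := {0, l}) (σ := m)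
      (by simp [hm0, hlm.symm, Set.mem_insert_iff])
    rwa [iSup_pair] at this
  have hfr2 : Module.finrank F ↥(Egen F x 0 ⊔ Egen F x l) = 3 := by
    rw [finrank_sup_of_disjoint' hd0l, h0, hL]
  have htop3 : Egen F x 0 ⊔ Egen F x l ⊔ Egen F x m = ⊤ := by
    apply Submodule.eq_top_of_finrank_eq
    rw [finrank_sup_of_disjoint' hdm_sup.symm, hfr2, hM, hdim]
  have hbot : ∀ σ : F, σ ≠ 0 → σ ≠ l → σ ≠ m → Egen F x σ = ⊥ := by
    intro σ hσ0 hσl hσm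
    have hd := egen_disjoint_sup x (s := {0, l, m}) (σ := σ)
      (by simp [hσ0, hσl, hσm, Set.mem_insert_iff])
    have hsup : (⨆ τ ∈ ({0, l, m} : Set F), Egen F x τ) = ⊤ := by
      rw [iSup_insert, iSup_pair, ← sup_assoc, htop3]
    rw [hsup, disjoint_top] at hd
    exact hd
  by_cases h2l : l + l = m
  · by_cases h3l : l + (l + l) = 0
    · -- characteristic 3 case : S = E₀ ⊔ span y ⊔ E_m with y an eigenvector in E_l
      obtain ⟨y, hy0, hyE, hyeig⟩ := egen_eigenvector (egen_ne_bot_of_finrank hL (by omega))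
      have hspanyle : span F {y} ≤ Egen F x l := (span_singleton_le_iff_mem y _).mpr hyE
      set S : Submodule F A := Egen F x 0 ⊔ span F {y} ⊔ Egen F x m with hS
      have hE0le : Egen F x 0 ≤ S := le_sup_left.trans le_sup_left
      have hyle : span F {y} ≤ S := le_sup_right.trans le_sup_left
      have hEmle : Egen F x m ≤ S := le_sup_right
      have hclosed : ∀ u ∈ S, ∀ v ∈ S, ⁅u, v⁆ ∈ S := by
        apply lie_mem_target_of_sup3
        · exact lie_mem_of_finrank_one h0
        · exact lie_mem_of_finrank_one (finrank_span_singleton hy0)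
        · exact lie_mem_of_finrank_one hM
        · -- E₀ with span y
          intro u hu v hv
          rw [hE0span] at hu
          obtain ⟨c, rfl⟩ := mem_span_singleton.mp hu
          obtain ⟨d, rfl⟩ := mem_span_singleton.mp hv
          rw [smul_lie, lie_smul, hyeig]
          exact smul_mem _ _ (smul_mem _ _ (smul_mem _ _ (hyle (mem_span_singleton_self y))))
        · -- E₀ with E_m
          exact egen_lie_mem_of_le (by rw [zero_add]; exact hEmle)
        · -- span y with E_m : lands in E (l + m) = E 0
          intro u hu v hv
          obtain ⟨d, rfl⟩ := mem_span_singleton.mp hu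
          rw [smul_lie]
          apply smul_mem
          have hmem := egen_lie hyE hv
          have hlmz : l + m = 0 := by linear_combination h3l - h2l
          rw [hlmz] at hmem
          exact hE0le hmem
      refine ⟨LieSubalgebra.ofSubmodule' S hclosed, ?_⟩
      rw [LieSubalgebra.finrank_ofSubmodule', hS]
      have hd1 : Disjoint (Egen F x 0) (span F {y}) := hd0l.mono_right hspanyle
      have hd2 : Disjoint (Egen F x 0 ⊔ span F {y}) (Egen F x m) := by
        apply hdm_sup.symm.mono_left
        exact sup_le_sup le_rfl hspanyle
      rw [finrank_sup_of_disjoint' hd2, finrank_sup_of_disjoint' hd1, h0,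
        finrank_span_singleton hy0, hM]
    · -- 3l ≠ 0 : S = E_l ⊔ E_m
      set S : Submodule F A := Egen F x l ⊔ Egen F x m with hS
      have hclosed : ∀ u ∈ S, ∀ v ∈ S, ⁅u, v⁆ ∈ S := by
        apply lie_mem_target_of_sup
        · exact egen_lie_mem_of_le (by rw [h2l]; exact le_sup_right)
        · exact lie_mem_of_finrank_one hM
        · refine egen_lie_mem_of_le ?_
          have : Egen F x (l + m) = ⊥ := by
            apply hbot
            · intro h; exact h3l (by linear_combination h + h2l)
            · intro h; exact hm0 (by linear_combination h)
            · intro h; exact hl0 (by linear_combination h)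
          rw [this]; exact bot_le
      refine ⟨LieSubalgebra.ofSubmodule' S hclosed, ?_⟩
      rw [LieSubalgebra.finrank_ofSubmodule', hS, finrank_sup_of_disjoint' hdlm, hL, hM]
  · -- 2l ≠ m : S = E₀ ⊔ E_l
    set S : Submodule F A := Egen F x 0 ⊔ Egen F x l with hS
    have hclosed : ∀ u ∈ S, ∀ v ∈ S, ⁅u, v⁆ ∈ S := by
      apply lie_mem_target_of_sup
      · exact lie_mem_of_finrank_one h0
      · refine egen_lie_mem_of_le ?_
        by_cases h1 : l + l = 0
        · rw [h1]; exact le_sup_left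
        · have : Egen F x (l + l) = ⊥ := by
            apply hbot _ h1 _ h2l
            intro h; exact hl0 (by linear_combination h)
          rw [this]; exact bot_le
      · exact egen_lie_mem_of_le (by rw [zero_add]; exact le_sup_right)
    exact ⟨LieSubalgebra.ofSubmodule' S hclosed, by
      rw [LieSubalgebra.finrank_ofSubmodule', hS, finrank_sup_of_disjoint' hd0l, h0, hL]⟩

end Cases
section Cases2

variable {F : Type*} [Field F] [IsAlgClosed F] {A : Type*} [LieRing A] [LieAlgebra F A]
  [Module.Finite F A]

/-- Case: `dim E₀ = 2`, `dim E_l = 2`. -/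
lemma spectral22 (x : A) (hdim : Module.finrank F A = 4) (l : F) (hl0 : l ≠ 0)
    (hxne : x ≠ 0)
    (h0 : Module.finrank F (Egen F x 0) = 2)
    (hL : Module.finrank F (Egen F x l) = 2) :
    ∃ S : LieSubalgebra F A, Module.finrank F S = 3 := by
  have hx0m : x ∈ Egen F x 0 := egen_self x
  have hd0l : Disjoint (Egen F x 0) (Egen F x l) := egen_disjoint x hl0.symm
  have htop2 : Egen F x 0 ⊔ Egen F x l = ⊤ := by
    apply Submodule.eq_top_of_finrank_eq
    rw [finrank_sup_of_disjoint' hd0l, h0, hL, hdim]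
  have hEll : Egen F x (l + l) ≤ Egen F x 0 := by
    by_cases h1 : l + l = 0
    · rw [h1]
    · have hne : Egen F x (l + l) = ⊥ := by
        have hd := egen_disjoint_sup x (s := {0, l}) (σ := l + l)
          (by
            simp only [Set.mem_insert_iff, Set.mem_singleton_iff, not_or]
            exact ⟨h1, fun h => hl0 (by linear_combination h)⟩)
        rwa [iSup_pair, htop2, disjoint_top] at hd
      rw [hne]; exact bot_le
  -- a basis of E_l
  let b : Basis (Fin 2) F ↥(Egen F x l) :=
    (Module.finBasis F ↥(Egen F x l)).reindex (finCongr hL)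
  set v : Fin 2 → A := fun i => ((b i : ↥(Egen F x l)) : A) with hv
  have hvmem : ∀ i, v i ∈ Egen F x l := fun i => (b i).2
  set w : A := ⁅v 0, v 1⁆ with hw
  have hwE0 : w ∈ Egen F x 0 := hEll (egen_lie (hvmem 0) (hvmem 1))
  have hquad : ∀ u ∈ Egen F x l, ∀ u' ∈ Egen F x l, ⁅u, u'⁆ ∈ span F {w} := by
    intro u hu u' hu'
    have e1 : u = b.repr ⟨u, hu⟩ 0 • v 0 + b.repr ⟨u, hu⟩ 1 • v 1 := by
      have h1 := b.sum_repr ⟨u, hu⟩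
      have h2 := congrArg (Subtype.val) h1
      rw [Fin.sum_univ_two] at h2
      simpa [hv] using h2.symm
    have e2 : u' = b.repr ⟨u', hu'⟩ 0 • v 0 + b.repr ⟨u', hu'⟩ 1 • v 1 := by
      have h1 := b.sum_repr ⟨u', hu'⟩
      have h2 := congrArg (Subtype.val) h1
      rw [Fin.sum_univ_two] at h2
      simpa [hv] using h2.symm
    rw [e1, e2, add_lie, lie_add, lie_add]
    simp only [smul_lie, lie_smul]
    refine add_mem (add_mem ?_ ?_) (add_mem ?_ ?_)
    · rw [lie_self, smul_zero, smul_zero]; exact zero_mem _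
    · exact smul_mem _ _ (smul_mem _ _ (mem_span_singleton_self _))
    · have hwmem : ⁅v 0, v 1⁆ ∈ span F {w} := by rw [← hw]; exact mem_span_singleton_self w
      rw [← lie_skew (v 1) (v 0)]
      exact smul_mem _ _ (smul_mem _ _ (neg_mem hwmem))
    · rw [lie_self, smul_zero, smul_zero]; exact zero_mem _
  by_cases hwz : w = 0
  · -- brackets on E_l vanish : S = span x ⊔ E_l
    set S : Submodule F A := span F {x} ⊔ Egen F x l with hS
    have hclosed : ∀ u ∈ S, ∀ v' ∈ S, ⁅u, v'⁆ ∈ S := by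
      apply lie_mem_target_of_sup
      · exact lie_mem_of_finrank_one (finrank_span_singleton hxne)
      · intro u hu u' hu'
        have hq := hquad u hu u' hu'
        rw [hwz, Submodule.span_zero_singleton, Submodule.mem_bot] at hq
        rw [hq]; exact zero_mem _
      · intro u hu v' hv'
        obtain ⟨c, rfl⟩ := mem_span_singleton.mp hu
        rw [smul_lie]
        apply smul_mem
        have hmem := egen_lie hx0m hv'
        rw [zero_add] at hmem
        exact Submodule.mem_sup_right hmem
    refine ⟨LieSubalgebra.ofSubmodule' S hclosed, ?_⟩
    rw [LieSubalgebra.finrank_ofSubmodule', hS]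
    have hd : Disjoint (span F {x}) (Egen F x l) :=
      hd0l.mono_left ((span_singleton_le_iff_mem x _).mpr hx0m)
    rw [finrank_sup_of_disjoint' hd, finrank_span_singleton hxne, hL]
  · -- S = span w ⊔ E_l
    set S : Submodule F A := span F {w} ⊔ Egen F x l with hS
    have hclosed : ∀ u ∈ S, ∀ v' ∈ S, ⁅u, v'⁆ ∈ S := by
      apply lie_mem_target_of_sup
      · exact lie_mem_of_finrank_one (finrank_span_singleton hwz)
      · exact fun u hu u' hu' => Submodule.mem_sup_left (hquad u hu u' hu')
      · intro u hu v' hv'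
        obtain ⟨c, rfl⟩ := mem_span_singleton.mp hu
        rw [smul_lie]
        apply smul_mem
        have hmem := egen_lie hwE0 hv'
        rw [zero_add] at hmem
        exact Submodule.mem_sup_right hmem
    refine ⟨LieSubalgebra.ofSubmodule' S hclosed, ?_⟩
    rw [LieSubalgebra.finrank_ofSubmodule', hS]
    have hd : Disjoint (span F {w}) (Egen F x l) :=
      hd0l.mono_left ((span_singleton_le_iff_mem w _).mpr hwE0)
    rw [finrank_sup_of_disjoint' hd, finrank_span_singleton hwz, hL]

/-- Case: `dim E₀ = 1`, `dim E_l = 3`. -/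
lemma spectral13 (x : A) (hdim : Module.finrank F A = 4) (l : F) (hl0 : l ≠ 0)
    (hxne : x ≠ 0)
    (h0 : Module.finrank F (Egen F x 0) = 1)
    (hL : Module.finrank F (Egen F x l) = 3) :
    ∃ S : LieSubalgebra F A, Module.finrank F S = 3 := by
  have hx0m : x ∈ Egen F x 0 := egen_self x
  have hE0span : Egen F x 0 = span F {x} := by
    refine (Submodule.eq_of_le_of_finrank_le ((span_singleton_le_iff_mem x _).mpr hx0m) ?_).symm
    rw [finrank_span_singleton hxne, h0]
  have hd0l : Disjoint (Egen F x 0) (Egen F x l) := egen_disjoint x hl0.symm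
  have htop2 : Egen F x 0 ⊔ Egen F x l = ⊤ := by
    apply Submodule.eq_top_of_finrank_eq
    rw [finrank_sup_of_disjoint' hd0l, h0, hL, hdim]
  have hEll : Egen F x (l + l) ≤ Egen F x 0 := by
    by_cases h1 : l + l = 0
    · rw [h1]
    · have hne : Egen F x (l + l) = ⊥ := by
        have hd := egen_disjoint_sup x (s := {0, l}) (σ := l + l)
          (by
            simp only [Set.mem_insert_iff, Set.mem_singleton_iff, not_or]
            exact ⟨h1, fun h => hl0 (by linear_combination h)⟩)
        rwa [iSup_pair, htop2, disjoint_top] at hd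
      rw [hne]; exact bot_le
  obtain ⟨W, hWle, hW2, hWinv⟩ := exists_invariant_two_dim (LieModule.toEnd F A A x) l hL
  have hWle' : W ≤ Egen F x l := hWle
  set S : Submodule F A := Egen F x 0 ⊔ W with hS
  have hclosed : ∀ u ∈ S, ∀ v ∈ S, ⁅u, v⁆ ∈ S := by
    apply lie_mem_target_of_sup
    · exact lie_mem_of_finrank_one h0
    · intro u hu u' hu'
      have hmem := egen_lie (hWle' hu) (hWle' hu')
      exact Submodule.mem_sup_left (hEll hmem)
    · intro u hu v hv
      rw [hE0span] at hu
      obtain ⟨c, rfl⟩ := mem_span_singleton.mp hu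
      rw [smul_lie]
      apply smul_mem
      have := hWinv v hv
      rw [LieModule.toEnd_apply_apply] at this
      exact Submodule.mem_sup_right this
  refine ⟨LieSubalgebra.ofSubmodule' S hclosed, ?_⟩
  rw [LieSubalgebra.finrank_ofSubmodule', hS]
  have hd : Disjoint (Egen F x 0) W := hd0l.mono_right hWle'
  rw [finrank_sup_of_disjoint' hd, h0, hW2]

end Cases2
section Cases3

variable {F : Type*} [Field F] [IsAlgClosed F] {A : Type*} [LieRing A] [LieAlgebra F A]
  [Module.Finite F A]

/-- Case: all four generalized eigenspaces are 1-dimensional. -/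
lemma spectral111 (x : A) (hdim : Module.finrank F A = 4) (l m n : F)
    (hl0 : l ≠ 0) (hm0 : m ≠ 0) (hn0 : n ≠ 0)
    (hlm : l ≠ m) (hln : l ≠ n) (hmn : m ≠ n)
    (h0 : Module.finrank F (Egen F x 0) = 1)
    (hL : Module.finrank F (Egen F x l) = 1)
    (hM : Module.finrank F (Egen F x m) = 1)
    (hN : Module.finrank F (Egen F x n) = 1) :
    ∃ S : LieSubalgebra F A, Module.finrank F S = 3 := by
  have hd0l : Disjoint (Egen F x 0) (Egen F x l) := egen_disjoint x hl0.symm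
  have hdlm : Disjoint (Egen F x l) (Egen F x m) := egen_disjoint x hlm
  have hd_lm : Disjoint (Egen F x m) (Egen F x 0 ⊔ Egen F x l) := by
    have := egen_disjoint_sup x (s := {0, l}) (σ := m)
      (by simp [hm0, hlm.symm, Set.mem_insert_iff])
    rwa [iSup_pair] at this
  have hd_n : Disjoint (Egen F x n) (Egen F x 0 ⊔ Egen F x l ⊔ Egen F x m) := by
    have := egen_disjoint_sup x (s := {0, l, m}) (σ := n)
      (by simp [hn0, hln.symm, hmn.symm, Set.mem_insert_iff])
    rwa [iSup_insert, iSup_pair, ← sup_assoc] at this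
  have hfr2 : Module.finrank F ↥(Egen F x 0 ⊔ Egen F x l) = 2 := by
    rw [finrank_sup_of_disjoint' hd0l, h0, hL]
  have hfr3 : Module.finrank F ↥(Egen F x 0 ⊔ Egen F x l ⊔ Egen F x m) = 3 := by
    rw [finrank_sup_of_disjoint' hd_lm.symm, hfr2, hM]
  have htop4 : Egen F x 0 ⊔ Egen F x l ⊔ Egen F x m ⊔ Egen F x n = ⊤ := by
    apply Submodule.eq_top_of_finrank_eq
    rw [finrank_sup_of_disjoint' hd_n.symm, hfr3, hN, hdim]
  have hbot : ∀ σ : F, σ ≠ 0 → σ ≠ l → σ ≠ m → σ ≠ n → Egen F x σ = ⊥ := by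
    intro σ h1 h2 h3 h4
    have hd := egen_disjoint_sup x (s := {0, l, m, n}) (σ := σ)
      (by simp [h1, h2, h3, h4, Set.mem_insert_iff])
    have hsup : (⨆ τ ∈ ({0, l, m, n} : Set F), Egen F x τ) = ⊤ := by
      rw [iSup_insert, iSup_insert, iSup_pair, ← sup_assoc, ← sup_assoc, htop4]
    rw [hsup, disjoint_top] at hd
    exact hd
  -- key construction for a good pair
  have key : ∀ a b c : F, a ≠ 0 → b ≠ 0 → a ≠ b →
      Module.finrank F (Egen F x a) = 1 → Module.finrank F (Egen F x b) = 1 →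
      (∀ σ : F, σ ≠ 0 → σ ≠ a → σ ≠ b → σ ≠ c → Egen F x σ = ⊥) → a + b ≠ c →
      ∃ S : LieSubalgebra F A, Module.finrank F S = 3 := by
    intro a b c ha0 hb0 hab hfa hfb hbot' hgood
    set S : Submodule F A := Egen F x 0 ⊔ Egen F x a ⊔ Egen F x b with hS
    have hable : Egen F x (a + b) ≤ S := by
      by_cases h1 : a + b = 0
      · rw [h1]; exact le_sup_left.trans le_sup_left
      by_cases h2 : a + b = a
      · rw [h2]; exact le_sup_right.trans le_sup_left
      by_cases h3 : a + b = b
      · rw [h3]; exact le_sup_right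
      rw [hbot' _ h1 h2 h3 hgood]; exact bot_le
    have hclosed : ∀ u ∈ S, ∀ v ∈ S, ⁅u, v⁆ ∈ S := by
      apply lie_mem_target_of_sup3
      · exact lie_mem_of_finrank_one h0
      · exact lie_mem_of_finrank_one hfa
      · exact lie_mem_of_finrank_one hfb
      · exact egen_lie_mem_of_le (by rw [zero_add]; exact le_sup_right.trans le_sup_left)
      · exact egen_lie_mem_of_le (by rw [zero_add]; exact le_sup_right)
      · exact egen_lie_mem_of_le hable
    refine ⟨LieSubalgebra.ofSubmodule' S hclosed, ?_⟩
    rw [LieSubalgebra.finrank_ofSubmodule', hS]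
    have hd1 : Disjoint (Egen F x 0) (Egen F x a) := egen_disjoint x ha0.symm
    have hd2 : Disjoint (Egen F x 0 ⊔ Egen F x a) (Egen F x b) := by
      have := egen_disjoint_sup x (s := {0, a}) (σ := b)
        (by simp [hb0, hab.symm, Set.mem_insert_iff])
      rw [iSup_pair] at this
      exact this.symm
    rw [finrank_sup_of_disjoint' hd2, finrank_sup_of_disjoint' hd1, h0, hfa, hfb]
  by_cases hgood1 : l + m ≠ n
  · exact key l m n hl0 hm0 hlm hL hM hbot hgood1
  push_neg at hgood1
  by_cases hgood2 : l + n ≠ m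
  · exact key l n m hl0 hn0 hln hL hN
      (fun σ h1 h2 h3 h4 => hbot σ h1 h2 h4 h3) hgood2
  push_neg at hgood2
  by_cases hgood3 : m + n ≠ l
  · exact key m n l hm0 hn0 hmn hM hN
      (fun σ h1 h2 h3 h4 => hbot σ h1 h4 h2 h3) hgood3
  push_neg at hgood3
  -- the fully degenerate (characteristic 2) case : S = E_l ⊔ E_m ⊔ E_n
  set S : Submodule F A := Egen F x l ⊔ Egen F x m ⊔ Egen F x n with hS
  have hclosed : ∀ u ∈ S, ∀ v ∈ S, ⁅u, v⁆ ∈ S := by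
    apply lie_mem_target_of_sup3
    · exact lie_mem_of_finrank_one hL
    · exact lie_mem_of_finrank_one hM
    · exact lie_mem_of_finrank_one hN
    · exact egen_lie_mem_of_le (by rw [hgood1]; exact le_sup_right)
    · exact egen_lie_mem_of_le (by rw [hgood2]; exact le_sup_right.trans le_sup_left)
    · exact egen_lie_mem_of_le (by rw [hgood3]; exact le_sup_left.trans le_sup_left)
  refine ⟨LieSubalgebra.ofSubmodule' S hclosed, ?_⟩
  rw [LieSubalgebra.finrank_ofSubmodule', hS]
  have hd2 : Disjoint (Egen F x l ⊔ Egen F x m) (Egen F x n) := by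
    have := egen_disjoint_sup x (s := {l, m}) (σ := n)
      (by simp [hln.symm, hmn.symm, Set.mem_insert_iff])
    rw [iSup_pair] at this
    exact this.symm
  rw [finrank_sup_of_disjoint' hd2, finrank_sup_of_disjoint' hdlm, hL, hM, hN]

end Cases3
section Master

variable {F : Type*} [Field F] [IsAlgClosed F] {A : Type*} [LieRing A] [LieAlgebra F A]
  [Module.Finite F A]

lemma spectral_main (x : A) (hx : ¬ IsNilpotent (LieModule.toEnd F A A x))
    (hdim : Module.finrank F A = 4) :
    ∃ S : LieSubalgebra F A, Module.finrank F S = 3 := by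
  have hxne : x ≠ 0 := by
    rintro rfl
    apply hx
    have h0 : LieModule.toEnd F A A (0 : A) = 0 := map_zero _
    rw [h0]
    exact IsNilpotent.zero
  have hx0m : x ∈ Egen F x 0 := egen_self x
  have h0ne : Egen F x 0 ≠ ⊥ := by
    intro h
    rw [h, Submodule.mem_bot] at hx0m
    exact hxne hx0m
  have h0pos : 1 ≤ Module.finrank F (Egen F x 0) := by
    rcases Nat.eq_zero_or_pos (Module.finrank F (Egen F x 0)) with h | h
    · exact absurd (Submodule.finrank_eq_zero.mp h) h0ne
    · omega
  have h0top : Egen F x 0 ≠ ⊤ := fun h => hx (isNilpotent_of_egen_zero_top h)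
  obtain ⟨l, hl0', hlne⟩ := egen_exists_new x ({0} : Set F) (by
    intro h
    apply h0top
    rwa [show (⨆ τ ∈ ({0} : Set F), Egen F x τ) = Egen F x 0 by simp] at h)
  have hl0 : l ≠ 0 := by simpa using hl0'
  have hlpos : 1 ≤ Module.finrank F (Egen F x l) := by
    rcases Nat.eq_zero_or_pos (Module.finrank F (Egen F x l)) with h | h
    · exact absurd (Submodule.finrank_eq_zero.mp h) hlne
    · omega
  have hd0l : Disjoint (Egen F x 0) (Egen F x l) := egen_disjoint x hl0.symm
  have hsum : Module.finrank F (Egen F x 0) + Module.finrank F (Egen F x l) ≤ 4 := by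
    have h1 := Submodule.finrank_le (Egen F x 0 ⊔ Egen F x l)
    rw [finrank_sup_of_disjoint' hd0l, hdim] at h1
    exact h1
  by_cases h03 : Module.finrank F (Egen F x 0) = 3
  · refine ⟨LieSubalgebra.ofSubmodule' (Egen F x 0)
      (fun u hu v hv => by have := egen_lie hu hv; rwa [zero_add] at this), ?_⟩
    rw [LieSubalgebra.finrank_ofSubmodule']
    exact h03
  by_cases h02 : Module.finrank F (Egen F x 0) = 2
  · by_cases hl2 : Module.finrank F (Egen F x l) = 2
    · exact spectral22 x hdim l hl0 hxne h02 hl2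
    · have hl1 : Module.finrank F (Egen F x l) = 1 := by omega
      set S : Submodule F A := Egen F x 0 ⊔ Egen F x l with hS
      have hclosed : ∀ u ∈ S, ∀ v ∈ S, ⁅u, v⁆ ∈ S := by
        apply lie_mem_target_of_sup
        · exact egen_lie_mem_of_le (by rw [zero_add]; exact le_sup_left)
        · exact lie_mem_of_finrank_one hl1
        · exact egen_lie_mem_of_le (by rw [zero_add]; exact le_sup_right)
      refine ⟨LieSubalgebra.ofSubmodule' S hclosed, ?_⟩
      rw [LieSubalgebra.finrank_ofSubmodule', hS, finrank_sup_of_disjoint' hd0l, h02, hl1]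
  have h01 : Module.finrank F (Egen F x 0) = 1 := by omega
  by_cases hl3 : Module.finrank F (Egen F x l) = 3
  · exact spectral13 x hdim l hl0 hxne h01 hl3
  -- we need a second eigenvalue
  have hfr0l : Module.finrank F ↥(Egen F x 0 ⊔ Egen F x l) =
      1 + Module.finrank F (Egen F x l) := by
    rw [finrank_sup_of_disjoint' hd0l, h01]
  obtain ⟨m, hmnot, hmne⟩ := egen_exists_new x ({0, l} : Set F) (by
    rw [iSup_pair]
    intro h
    rw [h, finrank_top, hdim] at hfr0l
    omega)
  have hm0 : m ≠ 0 := by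
    intro h; exact hmnot (by rw [h]; simp)
  have hml : m ≠ l := by
    intro h; exact hmnot (by rw [h]; simp)
  have hmpos : 1 ≤ Module.finrank F (Egen F x m) := by
    rcases Nat.eq_zero_or_pos (Module.finrank F (Egen F x m)) with h | h
    · exact absurd (Submodule.finrank_eq_zero.mp h) hmne
    · omega
  have hdm : Disjoint (Egen F x m) (Egen F x 0 ⊔ Egen F x l) := by
    have := egen_disjoint_sup x (s := {0, l}) (σ := m) hmnot
    rwa [iSup_pair] at this
  have hmsum : Module.finrank F (Egen F x m) +
      (1 + Module.finrank F (Egen F x l)) ≤ 4 := by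
    have h1 := Submodule.finrank_le (Egen F x m ⊔ (Egen F x 0 ⊔ Egen F x l))
    rw [finrank_sup_of_disjoint' hdm, hdim, hfr0l] at h1
    exact h1
  by_cases hl2 : Module.finrank F (Egen F x l) = 2
  · have hm1 : Module.finrank F (Egen F x m) = 1 := by omega
    exact spectral21 x hdim l m hl0 hm0 hml.symm hxne h01 hl2 hm1
  have hl1 : Module.finrank F (Egen F x l) = 1 := by omega
  by_cases hm2 : Module.finrank F (Egen F x m) = 2
  · exact spectral21 x hdim m l hm0 hl0 hml hxne h01 hm2 hl1
  have hm1 : Module.finrank F (Egen F x m) = 1 := by omega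
  -- we need a third eigenvalue
  have hfr3 : Module.finrank F ↥(Egen F x 0 ⊔ Egen F x l ⊔ Egen F x m) = 3 := by
    rw [finrank_sup_of_disjoint' hdm.symm, hfr0l, hl1, hm1]
  obtain ⟨n, hnnot, hnne⟩ := egen_exists_new x ({0, l, m} : Set F) (by
    rw [iSup_insert, iSup_pair, ← sup_assoc]
    intro h
    rw [h, finrank_top, hdim] at hfr3
    omega)
  have hn0 : n ≠ 0 := by intro h; exact hnnot (by rw [h]; simp)
  have hnl : n ≠ l := by intro h; exact hnnot (by rw [h]; simp)
  have hnm : n ≠ m := by intro h; exact hnnot (by rw [h]; simp)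
  have hdn : Disjoint (Egen F x n) (Egen F x 0 ⊔ Egen F x l ⊔ Egen F x m) := by
    have := egen_disjoint_sup x (s := ({0, l, m} : Set F)) (σ := n) hnnot
    rwa [iSup_insert, iSup_pair, ← sup_assoc] at this
  have hnpos : 1 ≤ Module.finrank F (Egen F x n) := by
    rcases Nat.eq_zero_or_pos (Module.finrank F (Egen F x n)) with h | h
    · exact absurd (Submodule.finrank_eq_zero.mp h) hnne
    · omega
  have hnsum : Module.finrank F (Egen F x n) + 3 ≤ 4 := by
    have h1 := Submodule.finrank_le (Egen F x n ⊔ (Egen F x 0 ⊔ Egen F x l ⊔ Egen F x m))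
    rw [finrank_sup_of_disjoint' hdn, hdim, hfr3] at h1
    exact h1
  have hn1 : Module.finrank F (Egen F x n) = 1 := by omega
  exact spectral111 x hdim l m n hl0 hm0 hn0 hml.symm hnl.symm hnm.symm h01 hl1 hm1 hn1

end Master
/-- Every 4-dimensional Lie algebra over an algebraically closed field has a
Lie subalgebra of codimension 1, i.e. of dimension 3. -/
theorem four_dim_lie_algebra_has_codim_one_subalgebra
    (F : Type*) [Field F] [IsAlgClosed F]
    (A : Type*) [LieRing A] [LieAlgebra F A]
    [Module.Finite F A] (hdim : Module.finrank F A = 4) :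
    ∃ S : LieSubalgebra F A, Module.finrank F S = 3 := by
  by_cases hperf : LieAlgebra.derivedSeries F A 1 = ⊤
  · -- the perfect case : use a non-nilpotent `ad x`
    have h1top : (⁅(⊤ : LieIdeal F A), (⊤ : LieIdeal F A)⁆ : LieIdeal F A) = ⊤ := by
      have := hperf
      rwa [LieAlgebra.derivedSeries_def, LieAlgebra.derivedSeriesOfIdeal_succ,
        LieAlgebra.derivedSeriesOfIdeal_zero] at this
    have hnn : ¬ LieRing.IsNilpotent A := by
      intro hnil
      have hsolv : LieAlgebra.IsSolvable A := inferInstance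
      obtain ⟨k, hk⟩ := LieAlgebra.IsSolvable.solvable F A
      have hall : ∀ j, LieAlgebra.derivedSeries F A j = ⊤ := by
        intro j
        induction j with
        | zero =>
          rw [LieAlgebra.derivedSeries_def, LieAlgebra.derivedSeriesOfIdeal_zero]
        | succ j ih =>
          rw [LieAlgebra.derivedSeries_def, LieAlgebra.derivedSeriesOfIdeal_succ,
            ← LieAlgebra.derivedSeries_def, ih]
          exact h1top
      rw [hall k] at hk
      have hsub : Subsingleton A := by
        constructor
        intro a b
        have ha : a ∈ (⊥ : LieIdeal F A) := hk ▸ LieSubmodule.mem_top a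
        have hb : b ∈ (⊥ : LieIdeal F A) := hk ▸ LieSubmodule.mem_top b
        rw [LieSubmodule.mem_bot] at ha hb
        rw [ha, hb]
      have : Module.finrank F A = 0 := Module.finrank_zero_iff.mpr hsub
      omega
    rw [LieAlgebra.isNilpotent_iff_forall (R := F)] at hnn
    push_neg at hnn
    obtain ⟨x, hxnil⟩ := hnn
    exact spectral_main x hxnil hdim
  · -- the derived algebra is proper : extend it to a hyperplane
    set D : Submodule F A := LieSubmodule.toSubmodule (LieAlgebra.derivedSeries F A 1) with hD
    have hD4 : Module.finrank F D ≤ 4 := by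
      have := Submodule.finrank_le D
      omega
    have hDne : Module.finrank F D ≠ 4 := by
      intro h
      apply hperf
      rw [← LieSubmodule.toSubmodule_eq_top]
      exact Submodule.eq_top_of_finrank_eq (by rw [← hD] at *; omega)
    obtain ⟨W, hDW, hW3⟩ := exists_superspace_finrank D 3 (by omega) (by omega)
    refine ⟨LieSubalgebra.ofSubmodule' W (fun u _ v _ => ?_), ?_⟩
    · apply hDW
      rw [hD, LieSubmodule.mem_toSubmodule]
      rw [LieAlgebra.derivedSeries_def, LieAlgebra.derivedSeriesOfIdeal_succ,
        LieAlgebra.derivedSeriesOfIdeal_zero]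
      exact LieSubmodule.lie_mem_lie (LieSubmodule.mem_top u) (LieSubmodule.mem_top v)
    · rw [LieSubalgebra.finrank_ofSubmodule']
      exact hW3
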